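/- Let Σ = X ∪ Y be an alphabet with X = {x_1,…,x_n} and Y disjoint sets. Let G = Y_0 x_1 Y_1 x_2 Y_2 ⋯ x_n Y_n be a genome where each Y_i for i ∈ [n] is a nonempty string over Y and Y_0 is a possibly empty string over Y. Let c be the CNP with c(x_i) = 1 for all i ∈ [n] and c(y) = 0 for all y ∈ Y. Then d_GCNP(G, c) ≥ n. -/

import Mathlib

/-- An event is either a deletion `del i j` (removing the substring from position `i`
to position `j`, 1-based) or a duplication `dup i j p` (copying the substring from
position `i` to position `j` and inserting the copy after position `p`). -/
inductive GEvent where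
  | del (i j : ℕ)
  | dup (i j p : ℕ)
deriving DecidableEq

/-- Applying an event to a genome (a list of characters). -/
def applyEvent {α : Type*} (G : List α) : GEvent → List α
  | .del i j => G.take (i - 1) ++ G.drop j
  | .dup i j p => G.take p ++ ((G.drop (i - 1)).take (j - i + 1)) ++ G.drop p

/-- Validity of an event on a genome: `del i j` requires `1 ≤ i ≤ j ≤ |G|`;
`dup i j p` requires `1 ≤ i ≤ j ≤ |G|` and `p ∈ {0,…,i−1} ∪ {j,…,|G|}`. -/
def GEvent.Valid {α : Type*} (G : List α) : GEvent → Prop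
  | .del i j => 1 ≤ i ∧ i ≤ j ∧ j ≤ G.length
  | .dup i j p => 1 ≤ i ∧ i ≤ j ∧ j ≤ G.length ∧ (p ≤ i - 1 ∨ (j ≤ p ∧ p ≤ G.length))

/-- `applyEvents G E` is `G⟨E⟩`, the genome obtained by successively applying
the events of `E` to `G`. -/
def applyEvents {α : Type*} (G : List α) : List GEvent → List α
  | [] => G
  | e :: E => applyEvents (applyEvent G e) E

/-- A sequence of events is valid on `G` if each event is valid on the genome
obtained by applying the previous events. -/
def ValidSeq {α : Type*} (G : List α) : List GEvent → Prop
  | [] => True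
  | e :: E => e.Valid G ∧ ValidSeq (applyEvent G e) E

/-- The copy-number profile of a genome: the number of occurrences of each character. -/
def cnp {α : Type*} [DecidableEq α] (G : List α) : α → ℕ := fun s => G.count s

/-- The Genome-to-CNP distance: the minimum length of a valid event sequence turning `G`
into a genome with CNP `c` (`⊤` if there is none). -/
noncomputable def dGCNP {α : Type*} [DecidableEq α] (G : List α) (c : α → ℕ) : ℕ∞ :=
  sInf { k : ℕ∞ | ∃ E : List GEvent,
    ValidSeq G E ∧ (E.length : ℕ∞) = k ∧ cnp (applyEvents G E) = c }

namespace AltLB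

variable {α : Type*}

/-- `PP Y L a`: some occurrence of `a` in `L` is followed by a non-`Y` character or
is at the end of `L`. -/
def PP (Y : Set α) (L : List α) (a : α) : Prop :=
  ∃ l₁ l₂ : List α, L = l₁ ++ a :: l₂ ∧ ∀ b ∈ l₂.head?, b ∉ Y

/-- Splitting lemma: if `X ++ Z = l₁ ++ a :: l₂`, the distinguished occurrence of `a`
is either in `X` or in `Z`. -/
lemma split_append {X Z l₁ l₂ : List α} {a : α} (h : X ++ Z = l₁ ++ a :: l₂) :
    (∃ m, X = l₁ ++ a :: m ∧ l₂ = m ++ Z) ∨ (∃ m, l₁ = X ++ m ∧ Z = m ++ a :: l₂) := by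
  induction X generalizing l₁ with
  | nil =>
    right
    exact ⟨l₁, rfl, by simpa using h⟩
  | cons x₀ X' ih =>
    cases l₁ with
    | nil =>
      simp only [List.nil_append, List.cons_append, List.cons.injEq] at h
      exact Or.inl ⟨X', by simp [h.1], h.2.symm⟩
    | cons y₀ l₁' =>
      simp only [List.cons_append, List.cons.injEq] at h
      rcases ih h.2 with ⟨m, h1, h2⟩ | ⟨m, h1, h2⟩
      · exact Or.inl ⟨m, by simp [h.1, h1], h2⟩
      · exact Or.inr ⟨m, by simp [h.1, h1], h2⟩

lemma step_del (Y : Set α) {A Ar Bp B L : List α} {a : α}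
    (hA : A ++ Ar = L) (hB : Bp ++ B = L) (h : PP Y (A ++ B) a) :
    PP Y L a ∨ A.getLast? = some a := by
  obtain ⟨l₁, l₂, heq, hok⟩ := h
  rcases split_append heq with ⟨m, h1, h2⟩ | ⟨m, h1, h2⟩
  · cases m with
    | nil => right; rw [h1]; exact List.getLast?_concat
    | cons d m' =>
      left
      refine ⟨l₁, d :: (m' ++ Ar), ?_, ?_⟩
      · rw [← hA, h1]; simp
      · intro b hb
        simp only [List.head?_cons, Option.mem_some_iff] at hb
        subst hb
        exact hok d (by simp [h2])
  · left
    exact ⟨Bp ++ m, l₂, by rw [← hB, h2]; simp, hok⟩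

lemma step_dup (Y : Set α) {A B T Tp Ts L : List α} {a : α}
    (hAB : A ++ B = L) (hT : Tp ++ (T ++ Ts) = L)
    (h : PP Y (A ++ (T ++ B)) a) :
    PP Y L a
    ∨ (A.getLast? = some a ∧ ¬ (∀ b ∈ B.head?, b ∉ Y))
    ∨ (T.getLast? = some a ∧ (∀ b ∈ B.head?, b ∉ Y)) := by
  obtain ⟨l₁, l₂, heq, hok⟩ := h
  rcases split_append heq with ⟨m, h1, h2⟩ | ⟨m, h1, h2⟩
  · -- occurrence inside A
    cases m with
    | nil =>
      by_cases hc : ∀ b ∈ B.head?, b ∉ Y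
      · left
        exact ⟨l₁, B, by rw [← hAB, h1]; simp, hc⟩
      · right; left
        exact ⟨by rw [h1]; exact List.getLast?_concat, hc⟩
    | cons d m' =>
      left
      refine ⟨l₁, d :: (m' ++ B), ?_, ?_⟩
      · rw [← hAB, h1]; simp
      · intro b hb
        simp only [List.head?_cons, Option.mem_some_iff] at hb
        subst hb
        exact hok d (by simp [h2])
  · -- occurrence inside T ++ B
    rcases split_append h2 with ⟨k, h3, h4⟩ | ⟨k, h3, h4⟩
    · -- occurrence inside T
      cases k with
      | nil =>
        right; right
        refine ⟨by rw [h3]; exact List.getLast?_concat, ?_⟩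
        intro b hb
        exact hok b (by rw [h4]; simpa using hb)
      | cons d k' =>
        left
        refine ⟨Tp ++ m, d :: (k' ++ Ts), ?_, ?_⟩
        · rw [← hT, h3]; simp
        · intro b hb
          simp only [List.head?_cons, Option.mem_some_iff] at hb
          subst hb
          exact hok d (by simp [h4])
    · -- occurrence inside B
      left
      exact ⟨A ++ k, l₂, by rw [← hAB, h4]; simp, hok⟩

lemma lastSet_ncard_le_one {n : ℕ} {x : Fin n → α} (hx : Function.Injective x)
    (L : List α) : {i : Fin n | L.getLast? = some (x i)}.ncard ≤ 1 := by
  have hsub : {i : Fin n | L.getLast? = some (x i)}.Subsingleton := by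
    intro i hi j hj
    exact hx (Option.some.inj (hi.symm.trans hj))
  rcases hsub.eq_empty_or_singleton with h | ⟨i₀, h⟩ <;> simp [h]

/-- Each event can make `PP` become true for at most one letter. -/
lemma step_event {n : ℕ} (x : Fin n → α) (hx : Function.Injective x) (Y : Set α)
    (H : List α) (e : GEvent) :
    ∃ s : Set (Fin n), s.ncard ≤ 1 ∧
      ∀ i : Fin n, PP Y (applyEvent H e) (x i) → PP Y H (x i) ∨ i ∈ s := by
  cases e with
  | del i j =>
    refine ⟨{i' | (H.take (i - 1)).getLast? = some (x i')}, lastSet_ncard_le_one hx _, ?_⟩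
    intro i' h
    have := step_del Y (A := H.take (i - 1)) (Ar := H.drop (i - 1))
      (Bp := H.take j) (B := H.drop j) (L := H)
      (List.take_append_drop _ _) (List.take_append_drop _ _) h
    rcases this with h' | h'
    · exact Or.inl h'
    · exact Or.inr h'
  | dup i j p =>
    by_cases hc : ∀ b ∈ (H.drop p).head?, b ∉ Y
    · refine ⟨{i' | ((H.drop (i - 1)).take (j - i + 1)).getLast? = some (x i')},
        lastSet_ncard_le_one hx _, ?_⟩
      intro i' h
      have h2 : PP Y (H.take p ++ (((H.drop (i - 1)).take (j - i + 1)) ++ H.drop p)) (x i') := by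
        simpa [applyEvent, List.append_assoc] using h
      have := step_dup Y (A := H.take p) (B := H.drop p)
        (T := (H.drop (i - 1)).take (j - i + 1))
        (Tp := H.take (i - 1)) (Ts := (H.drop (i - 1)).drop (j - i + 1)) (L := H)
        (List.take_append_drop _ _)
        (by rw [List.take_append_drop]; exact List.take_append_drop _ _) h2
      rcases this with h' | ⟨_, h'⟩ | ⟨h', _⟩
      · exact Or.inl h'
      · exact absurd hc h'
      · exact Or.inr h'
    · refine ⟨{i' | (H.take p).getLast? = some (x i')}, lastSet_ncard_le_one hx _, ?_⟩
      intro i' h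
      have h2 : PP Y (H.take p ++ (((H.drop (i - 1)).take (j - i + 1)) ++ H.drop p)) (x i') := by
        simpa [applyEvent, List.append_assoc] using h
      have := step_dup Y (A := H.take p) (B := H.drop p)
        (T := (H.drop (i - 1)).take (j - i + 1))
        (Tp := H.take (i - 1)) (Ts := (H.drop (i - 1)).drop (j - i + 1)) (L := H)
        (List.take_append_drop _ _)
        (by rw [List.take_append_drop]; exact List.take_append_drop _ _) h2
      rcases this with h' | ⟨h', _⟩ | ⟨_, h'⟩
      · exact Or.inl h'
      · exact Or.inr h'
      · exact absurd h' hc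

/-- Main counting lemma: the number of letters for which `PP` fails is at most the
number of remaining events. -/
lemma card_le [DecidableEq α] {n : ℕ} (x : Fin n → α) (hx : Function.Injective x)
    (Y : Set α) (c : α → ℕ) (hc1 : ∀ i, c (x i) = 1) (hc0 : ∀ a ∈ Y, c a = 0) :
    ∀ (E : List GEvent) (H : List α), cnp (applyEvents H E) = c →
      {i : Fin n | ¬ PP Y H (x i)}.ncard ≤ E.length := by
  intro E
  induction E with
  | nil =>
    intro H hH
    have hH' : cnp H = c := hH
    have hall : ∀ i : Fin n, PP Y H (x i) := by
      intro i
      have hcount : H.count (x i) = 1 := by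
        have : cnp H (x i) = c (x i) := by rw [hH']
        simpa [cnp, hc1 i] using this
      have hmem : x i ∈ H := by
        rw [← List.count_pos_iff, hcount]; norm_num
      obtain ⟨l₁, l₂, heq⟩ := List.append_of_mem hmem
      refine ⟨l₁, l₂, heq, ?_⟩
      intro b hb hbY
      have hbH : b ∈ H := by
        rw [heq]
        have : b ∈ l₂ := List.mem_of_mem_head? hb
        simp [this]
      have h0 : H.count b = 0 := by
        have : cnp H b = c b := by rw [hH']
        simpa [cnp, hc0 b hbY] using this
      have := List.count_pos_iff.mpr hbH
      omega
    have : {i : Fin n | ¬ PP Y H (x i)} = ∅ := by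
      ext i; simp [hall i]
    simp [this]
  | cons e E ih =>
    intro H hH
    obtain ⟨s, hs1, hs2⟩ := step_event x hx Y H e
    have hsub : {i : Fin n | ¬ PP Y H (x i)} ⊆
        {i : Fin n | ¬ PP Y (applyEvent H e) (x i)} ∪ s := by
      intro i hi
      by_cases h' : PP Y (applyEvent H e) (x i)
      · rcases hs2 i h' with h'' | h''
        · exact absurd h'' hi
        · exact Or.inr h''
      · exact Or.inl h'
    calc {i : Fin n | ¬ PP Y H (x i)}.ncard
        ≤ ({i : Fin n | ¬ PP Y (applyEvent H e) (x i)} ∪ s).ncard :=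
          Set.ncard_le_ncard hsub
      _ ≤ {i : Fin n | ¬ PP Y (applyEvent H e) (x i)}.ncard + s.ncard :=
          Set.ncard_union_le _ _
      _ ≤ E.length + 1 := by
          have := ih (applyEvent H e) hH
          omega
      _ = (e :: E).length := by simp

/-- `QQ Y L`: every non-`Y` character of `L` is immediately followed by a `Y` character. -/
def QQ (Y : Set α) (L : List α) : Prop :=
  ∀ l₁ a l₂, L = l₁ ++ a :: l₂ → a ∉ Y → ∃ b ∈ l₂.head?, b ∈ Y

lemma qq_nil (Y : Set α) : QQ Y ([] : List α) := by
  intro l₁ a l₂ h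
  exact absurd h (by simp)

lemma qq_consY (Y : Set α) {y : α} {L : List α} (hy : y ∈ Y) (h : QQ Y L) :
    QQ Y (y :: L) := by
  intro l₁ a l₂ heq ha
  cases l₁ with
  | nil =>
    simp only [List.nil_append, List.cons.injEq] at heq
    exact absurd (heq.1 ▸ hy) ha
  | cons h₁ t₁ =>
    simp only [List.cons_append, List.cons.injEq] at heq
    exact h t₁ a l₂ heq.2 ha

lemma qq_consHead (Y : Set α) {a' : α} {L : List α}
    (hhd : ∃ b ∈ L.head?, b ∈ Y) (h : QQ Y L) : QQ Y (a' :: L) := by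
  intro l₁ a l₂ heq ha
  cases l₁ with
  | nil =>
    simp only [List.nil_append, List.cons.injEq] at heq
    exact heq.2 ▸ hhd
  | cons h₁ t₁ =>
    simp only [List.cons_append, List.cons.injEq] at heq
    exact h t₁ a l₂ heq.2 ha

lemma qq_appendY (Y : Set α) {ys L : List α} (hys : ∀ a ∈ ys, a ∈ Y) (h : QQ Y L) :
    QQ Y (ys ++ L) := by
  induction ys with
  | nil => simpa using h
  | cons y t ih =>
    simp only [List.cons_append]
    exact qq_consY Y (hys y (by simp)) (ih (fun a ha => hys a (by simp [ha])))

lemma qq_flat {n : ℕ} (Y : Set α) (x : Fin n → α) (Ys : Fin (n + 1) → List α)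
    (hYs : ∀ i, ∀ a ∈ Ys i, a ∈ Y) (hYne : ∀ i : Fin (n + 1), i ≠ 0 → Ys i ≠ []) :
    ∀ l : List (Fin n), QQ Y (l.flatMap fun i => x i :: Ys i.succ) := by
  intro l
  induction l with
  | nil => simpa using qq_nil Y
  | cons i l' ih =>
    have heq : ((i :: l').flatMap fun i => x i :: Ys i.succ)
        = x i :: (Ys i.succ ++ l'.flatMap fun i => x i :: Ys i.succ) := by
      simp
    rw [heq]
    refine qq_consHead Y ?_ (qq_appendY Y (hYs i.succ) ih)
    cases hYsne : Ys i.succ with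
    | nil => exact absurd hYsne (hYne _ (Fin.succ_ne_zero i))
    | cons b t =>
      exact ⟨b, by simp, hYs i.succ b (by rw [hYsne]; simp)⟩

end AltLB

/-- lower bound of Lemma 5 of the paper: let the alphabet `α` be the
disjoint union of `X = {x 0, …, x (n−1)}` (the `x i` being pairwise distinct) and `Y`.
Let `G = Y₀ x₁ Y₁ x₂ Y₂ ⋯ xₙ Yₙ` where each `Yᵢ` (for `i ≥ 1`) is a nonempty string
over `Y` and `Y₀` is a possibly empty string over `Y`, and let `c` be the CNP with
`c(xᵢ) = 1` for all `i` and `c(y) = 0` for all `y ∈ Y`.  Then `d_GCNP(G, c) ≥ n`. -/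
theorem alternating_lower_bound
    {α : Type*} [DecidableEq α] (n : ℕ)
    (x : Fin n → α) (hx : Function.Injective x)
    (Y : Set α)
    (hXY : ∀ i, x i ∉ Y)
    (hall : ∀ a : α, (∃ i, a = x i) ∨ a ∈ Y)
    (Ys : Fin (n + 1) → List α)
    (hYs : ∀ i, ∀ a ∈ Ys i, a ∈ Y)
    (hYne : ∀ i : Fin (n + 1), i ≠ 0 → Ys i ≠ [])
    (c : α → ℕ)
    (hc1 : ∀ i, c (x i) = 1)
    (hc0 : ∀ a ∈ Y, c a = 0)
    (G : List α)
    (hG : G = Ys 0 ++ (List.finRange n).flatMap (fun i => x i :: Ys i.succ)) :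
    (n : ℕ∞) ≤ dGCNP G c := by
  refine le_sInf ?_
  rintro k ⟨E, -, rfl, hcnp⟩
  have hbound := AltLB.card_le x hx Y c hc1 hc0 E G hcnp
  have hQG : AltLB.QQ Y G := by
    rw [hG]
    exact AltLB.qq_appendY Y (hYs 0) (AltLB.qq_flat Y x Ys hYs hYne _)
  have hnot : ∀ i : Fin n, ¬ AltLB.PP Y G (x i) := by
    intro i hPP
    obtain ⟨l₁, l₂, heq, hok⟩ := hPP
    obtain ⟨b, hb, hbY⟩ := hQG l₁ (x i) l₂ heq (hXY i)
    exact hok b hb hbY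
  have huniv : {i : Fin n | ¬ AltLB.PP Y G (x i)} = Set.univ := by
    ext i; simp [hnot i]
  rw [huniv, Set.ncard_univ, Nat.card_eq_fintype_card, Fintype.card_fin] at hbound
  exact_mod_cast hbound
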